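/- arXiv:2111.05694 — 3 statements merged into one kernel-verified Lean document; each statement's English description precedes it below -/
import Mathlib

section
/- Consider the MinHash collision probability: if h is a uniformly random injective function from a finite universe U to a totally ordered set (equivalently, a uniformly random permutation of U), then for finite nonempty sets A, B ⊆ U, the probability that argmin over A of h equals argmin over B of h is |A ∩ B| / |A ∪ B| (the Jaccard similarity of A and B). -/
open Finset

namespace MinhashAux

variable {U : Type*} [Fintype U] [DecidableEq U]

/-- The element of `S` where `σ` attains its minimum. -/
def argmin (σ : U ≃ Fin (Fintype.card U)) (S : Finset U) (hS : S.Nonempty) : U :=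
  σ.symm ((S.image fun x => σ x).min' (hS.image _))

lemma argmin_mem (σ : U ≃ Fin (Fintype.card U)) (S : Finset U) (hS : S.Nonempty) :
    argmin σ S hS ∈ S := by
  have h := Finset.min'_mem (S.image fun x => σ x) (hS.image _)
  rw [Finset.mem_image] at h
  obtain ⟨x, hx, hσ⟩ := h
  simpa [argmin, ← hσ] using hx

lemma sigma_argmin (σ : U ≃ Fin (Fintype.card U)) (S : Finset U) (hS : S.Nonempty) :
    σ (argmin σ S hS) = (S.image fun x => σ x).min' (hS.image _) := by
  simp [argmin]

lemma argmin_mem_iff (σ : U ≃ Fin (Fintype.card U)) (A B : Finset U)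
    (hA : A.Nonempty) (hB : B.Nonempty) :
    argmin σ (A ∪ B) (hA.mono subset_union_left) ∈ A ↔
      ((A ∪ B).image fun x => σ x).min' ((hA.mono subset_union_left).image _)
        = (A.image fun x => σ x).min' (hA.image _) := by
  constructor
  · intro h
    apply le_antisymm
    · exact Finset.min'_subset _ (Finset.image_subset_image subset_union_left)
    · rw [← sigma_argmin σ (A ∪ B) (hA.mono subset_union_left)]
      exact Finset.min'_le _ _ (Finset.mem_image_of_mem _ h)
  · intro h
    have h2 : σ (argmin σ (A ∪ B) (hA.mono subset_union_left)) ∈ A.image fun x => σ x := by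
      rw [sigma_argmin, h]; exact Finset.min'_mem _ _
    rw [Finset.mem_image] at h2
    obtain ⟨x, hx, hσ⟩ := h2
    rwa [← σ.injective hσ]

lemma key (σ : U ≃ Fin (Fintype.card U)) (A B : Finset U)
    (hA : A.Nonempty) (hB : B.Nonempty) :
    ((A.image fun x => σ x).min' (hA.image _) = (B.image fun x => σ x).min' (hB.image _))
      ↔ argmin σ (A ∪ B) (hA.mono subset_union_left) ∈ A ∩ B := by
  have hBiff : argmin σ (A ∪ B) (hA.mono subset_union_left) ∈ B ↔
      ((A ∪ B).image fun x => σ x).min' ((hA.mono subset_union_left).image _)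
        = (B.image fun x => σ x).min' (hB.image _) := by
    have := argmin_mem_iff σ B A hB hA
    simpa [Finset.union_comm B A] using this
  rw [Finset.mem_inter, argmin_mem_iff σ A B hA hB, hBiff]
  constructor
  · intro h
    have hmin : ((A ∪ B).image fun x => σ x).min' ((hA.mono subset_union_left).image _)
        = (A.image fun x => σ x).min' (hA.image _) := by
      apply le_antisymm
      · exact Finset.min'_subset _ (Finset.image_subset_image subset_union_left)
      · apply Finset.le_min'
        intro y hy
        rw [Finset.image_union, Finset.mem_union] at hy
        rcases hy with hy | hy
        · exact Finset.min'_le _ _ hy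
        · rw [h]; exact Finset.min'_le _ _ hy
    exact ⟨hmin, hmin.trans h⟩
  · rintro ⟨h1, h2⟩
    rw [← h1, ← h2]

lemma argmin_swap (σ : U ≃ Fin (Fintype.card U)) (S : Finset U) (hS : S.Nonempty)
    {x y : U} (hx : x ∈ S) (hy : y ∈ S) :
    argmin ((Equiv.swap x y).trans σ) S hS = Equiv.swap x y (argmin σ S hS) := by
  have himg : (S.image fun z => σ (Equiv.swap x y z)) = S.image fun z => σ z := by
    have h1 : S.image (fun z => (Equiv.swap x y) z) = S := by
      apply Finset.eq_of_subset_of_card_le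
      · intro z hz
        rw [Finset.mem_image] at hz
        obtain ⟨w, hw, rfl⟩ := hz
        rcases eq_or_ne w x with rfl | hwx
        · simpa [Equiv.swap_apply_left] using hy
        rcases eq_or_ne w y with rfl | hwy
        · simpa [Equiv.swap_apply_right] using hx
        · rwa [Equiv.swap_apply_of_ne_of_ne hwx hwy]
      · rw [Finset.card_image_of_injective _ (Equiv.injective _)]
    calc (S.image fun z => σ (Equiv.swap x y z))
        = (S.image fun z => (Equiv.swap x y) z).image fun z => σ z := by
          rw [Finset.image_image]; rfl
      _ = S.image fun z => σ z := by rw [h1]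
  have himg' : (S.image fun z => ((Equiv.swap x y).trans σ) z) = S.image fun z => σ z := by
    simpa [Equiv.trans_apply] using himg
  unfold argmin
  simp only [Equiv.symm_trans_apply, Equiv.symm_swap, himg']

lemma fiber_card_eq (S : Finset U) (hS : S.Nonempty) {x y : U} (hx : x ∈ S) (hy : y ∈ S) :
    (univ.filter fun σ : U ≃ Fin (Fintype.card U) => argmin σ S hS = x).card
      = (univ.filter fun σ : U ≃ Fin (Fintype.card U) => argmin σ S hS = y).card := by
  apply Finset.card_nbij' (fun σ => (Equiv.swap x y).trans σ) (fun σ => (Equiv.swap x y).trans σ)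
  · intro σ hσ
    simp only [Finset.mem_coe, Finset.mem_filter] at hσ ⊢
    refine ⟨Finset.mem_univ _, ?_⟩
    rw [argmin_swap σ S hS hx hy, hσ.2, Equiv.swap_apply_left]
  · intro σ hσ
    simp only [Finset.mem_coe, Finset.mem_filter] at hσ ⊢
    refine ⟨Finset.mem_univ _, ?_⟩
    rw [argmin_swap σ S hS hx hy, hσ.2, Equiv.swap_apply_right]
  · intro σ _
    ext z
    simp [Equiv.swap_apply_self]
  · intro σ _
    ext z
    simp [Equiv.swap_apply_self]

lemma total_card (S : Finset U) (hS : S.Nonempty) {x : U} (hx : x ∈ S) :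
    Fintype.card (U ≃ Fin (Fintype.card U))
      = S.card * (univ.filter fun σ : U ≃ Fin (Fintype.card U) => argmin σ S hS = x).card := by
  rw [← Finset.card_univ,
    Finset.card_eq_sum_card_fiberwise (f := fun σ => argmin σ S hS) (t := S)
      (fun σ _ => argmin_mem σ S hS)]
  rw [Finset.sum_congr rfl (fun y hy => fiber_card_eq S hS hy hx), Finset.sum_const, smul_eq_mul]

lemma event_card (A B : Finset U) (hA : A.Nonempty) (hB : B.Nonempty) {x : U}
    (hx : x ∈ A ∪ B) :
    (univ.filter fun σ : U ≃ Fin (Fintype.card U) =>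
        (A.image fun x => σ x).min' (hA.image _) =
        (B.image fun x => σ x).min' (hB.image _)).card
      = (A ∩ B).card *
        (univ.filter fun σ : U ≃ Fin (Fintype.card U) =>
          argmin σ (A ∪ B) (hA.mono subset_union_left) = x).card := by
  have h1 : (univ.filter fun σ : U ≃ Fin (Fintype.card U) =>
      (A.image fun x => σ x).min' (hA.image _) =
      (B.image fun x => σ x).min' (hB.image _))
      = univ.filter fun σ => argmin σ (A ∪ B) (hA.mono subset_union_left) ∈ A ∩ B := by
    apply Finset.filter_congr
    intro σ _
    simp [key σ A B hA hB]
  rw [h1, Finset.card_eq_sum_card_fiberwise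
      (s := univ.filter fun σ : U ≃ Fin (Fintype.card U) =>
        argmin σ (A ∪ B) (hA.mono subset_union_left) ∈ A ∩ B)
      (f := fun σ => argmin σ (A ∪ B) (hA.mono subset_union_left)) (t := A ∩ B)
      (fun σ hσ => Finset.mem_coe.mpr (Finset.mem_filter.mp hσ).2)]
  have h2 : ∀ y ∈ A ∩ B,
      ((univ.filter fun σ : U ≃ Fin (Fintype.card U) =>
        argmin σ (A ∪ B) (hA.mono subset_union_left) ∈ A ∩ B).filter
          fun σ => argmin σ (A ∪ B) (hA.mono subset_union_left) = y).card
      = (univ.filter fun σ : U ≃ Fin (Fintype.card U) =>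
          argmin σ (A ∪ B) (hA.mono subset_union_left) = x).card := by
    intro y hy
    rw [Finset.filter_filter]
    have h3 : (univ.filter fun σ : U ≃ Fin (Fintype.card U) =>
        argmin σ (A ∪ B) (hA.mono subset_union_left) ∈ A ∩ B ∧
        argmin σ (A ∪ B) (hA.mono subset_union_left) = y)
        = univ.filter fun σ => argmin σ (A ∪ B) (hA.mono subset_union_left) = y := by
      apply Finset.filter_congr
      intro σ _
      constructor
      · exact fun h => h.2
      · exact fun h => ⟨h ▸ hy, h⟩
    rw [h3]
    exact fiber_card_eq (A ∪ B) (hA.mono subset_union_left)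
      (Finset.mem_union_left B (Finset.mem_inter.mp hy).1) hx
  rw [Finset.sum_congr rfl h2, Finset.sum_const, smul_eq_mul]

end MinhashAux

/-- MinHash collision probability. If `σ` is a uniformly random bijection
from a finite universe `U` to `Fin |U|`, then for nonempty finite sets `A, B ⊆ U`, the
probability that the minimizer of `σ` over `A` equals the minimizer of `σ` over `B` is
the Jaccard similarity `|A ∩ B| / |A ∪ B|`. (The argmins coincide iff the minimal
`σ`-values over `A` and over `B` coincide, since `σ` is injective.) -/
theorem minhash_jaccard {U : Type*} [Fintype U] [DecidableEq U]
    (A B : Finset U) (hA : A.Nonempty) (hB : B.Nonempty) :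
    ((univ.filter fun σ : U ≃ Fin (Fintype.card U) =>
        (A.image fun x => σ x).min' (hA.image _) =
        (B.image fun x => σ x).min' (hB.image _)).card : ℝ)
      / (Fintype.card (U ≃ Fin (Fintype.card U)) : ℝ)
      = ((A ∩ B).card : ℝ) / ((A ∪ B).card : ℝ) := by
  obtain ⟨x, hx⟩ := hA
  have hxU : x ∈ A ∪ B := Finset.mem_union_left B hx
  have h1 := MinhashAux.event_card A B ⟨x, hx⟩ hB hxU
  have h2 := MinhashAux.total_card (A ∪ B) (Finset.Nonempty.mono Finset.subset_union_left ⟨x, hx⟩) hxU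
  set N := (univ.filter fun σ : U ≃ Fin (Fintype.card U) =>
      MinhashAux.argmin σ (A ∪ B) (Finset.Nonempty.mono Finset.subset_union_left ⟨x, hx⟩) = x).card with hN
  have hNpos : 0 < N := by
    have hc : 0 < Fintype.card (U ≃ Fin (Fintype.card U)) :=
      Fintype.card_pos_iff.mpr ⟨Fintype.equivFin U⟩
    by_contra h
    push_neg at h
    rw [Nat.le_zero] at h
    rw [h, mul_zero] at h2
    exact hc.ne' h2
  rw [h1, h2]
  push_cast
  rw [mul_comm ((A ∪ B).card : ℝ) (N : ℝ)]
  rw [mul_comm ((A ∩ B).card : ℝ) (N : ℝ)]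
  rw [mul_div_mul_left _ _ (by exact_mod_cast hNpos.ne' : (N : ℝ) ≠ 0)]
end

section
/- The random projection hash h_{w,b}(x) = ⌊(⟨x,w⟩ + b)/l⌋ satisfies: for fixed x, y ∈ ℝ^d and fixed w, if b is uniform on [0, l], then the probability that h_{w,b}(x) = h_{w,b}(y) equals max(0, 1 − |⟨x−y, w⟩|/l). -/
open MeasureTheory Set

private lemma floor_eq_iff_lt' {l : ℝ} (hl : 0 < l) {t u : ℝ} (ht : 0 ≤ t) :
    ⌊(u + t) / l⌋ = ⌊u / l⌋ ↔ u + t < (⌊u / l⌋ + 1) * l := by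
  constructor
  · intro h
    have h1 : (u + t) / l < ⌊(u + t) / l⌋ + 1 := Int.lt_floor_add_one _
    rw [h] at h1
    have := (div_lt_iff₀ hl).mp h1
    push_cast at this ⊢
    linarith
  · intro h
    have h1 : (⌊u / l⌋ : ℝ) ≤ (u + t) / l := by
      refine le_trans (Int.floor_le _) ?_
      exact div_le_div_of_nonneg_right (by linarith) hl.le
    have h2 : (u + t) / l < ⌊u / l⌋ + 1 := by
      rw [div_lt_iff₀ hl]
      push_cast
      push_cast at h
      linarith
    exact Int.floor_eq_iff.mpr ⟨h1, h2⟩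

private lemma key_vol (l : ℝ) (hl : 0 < l) {t : ℝ} (ht0 : 0 ≤ t) (htl : t < l) (c : ℝ) :
    volume {b ∈ Set.Icc (0:ℝ) l | ⌊(c + t + b) / l⌋ = ⌊(c + b) / l⌋}
      = ENNReal.ofReal (l - t) := by
  have hset : {b ∈ Set.Icc (0:ℝ) l | ⌊(c + t + b) / l⌋ = ⌊(c + b) / l⌋}
      = (c + ·) ⁻¹' {u ∈ Set.Icc c (c + l) | ⌊(u + t) / l⌋ = ⌊u / l⌋} := by
    ext b
    simp only [mem_setOf_eq, mem_preimage, Set.mem_Icc]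
    constructor
    · rintro ⟨⟨h1, h2⟩, h3⟩
      exact ⟨⟨by linarith, by linarith⟩, by rw [show c + b + t = c + t + b by ring]; exact h3⟩
    · rintro ⟨⟨h1, h2⟩, h3⟩
      exact ⟨⟨by linarith, by linarith⟩, by rw [show c + t + b = c + b + t by ring]; exact h3⟩
  rw [hset, measure_preimage_add]
  set n0 : ℤ := ⌊c / l⌋ with hn0
  have hn0l : (n0 : ℝ) * l ≤ c := by
    have := Int.floor_le (c / l)
    calc (n0:ℝ) * l ≤ (c / l) * l := by nlinarith
    _ = c := by field_simp
  have hn0u : c < ((n0 : ℝ) + 1) * l := by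
    have := Int.lt_floor_add_one (c / l)
    calc c = (c / l) * l := by field_simp
    _ < ((n0:ℝ)+1) * l := by nlinarith
  set A : ℝ := (n0 : ℝ) * l + (l - t) with hA
  set B : ℝ := ((n0 : ℝ) + 1) * l with hB
  set M : ℝ := min (c + l) (B + (l - t)) with hM
  have hT : {u ∈ Set.Ico c (c + l) | ⌊(u + t) / l⌋ = ⌊u / l⌋}
      = Set.Ico c A ∪ Set.Ico B M := by
    ext u
    simp only [mem_setOf_eq, Set.mem_Ico, Set.mem_union, mem_setOf_eq]
    constructor
    · rintro ⟨⟨h1, h2⟩, h3⟩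
      rw [floor_eq_iff_lt' hl ht0] at h3
      have hfl : ⌊u / l⌋ = n0 ∨ ⌊u / l⌋ = n0 + 1 := by
        have hlo : n0 ≤ ⌊u / l⌋ := Int.floor_le_floor (div_le_div_of_nonneg_right h1 hl.le)
        have hhi : ⌊u / l⌋ ≤ n0 + 1 := by
          have h6 : u / l < ((n0 + 2 : ℤ) : ℝ) := by
            push_cast; rw [div_lt_iff₀ hl]; nlinarith
          have := Int.floor_lt.mpr h6
          omega
        omega
      rcases hfl with hfl | hfl
      · left
        rw [hfl] at h3
        push_cast at h3
        exact ⟨h1, by simp only [hA]; linarith⟩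
      · right
        have hub : (n0 : ℝ) + 1 ≤ u / l := by
          have h7 := Int.floor_le (u / l)
          rw [hfl] at h7
          push_cast at h7
          linarith
        have hBu : B ≤ u := by
          rw [hB]
          calc ((n0:ℝ)+1) * l ≤ (u / l) * l := by nlinarith
          _ = u := by field_simp
        rw [hfl] at h3
        push_cast at h3
        refine ⟨hBu, ?_⟩
        rw [hM]
        exact lt_min (by linarith) (by simp only [hB]; linarith)
    · rintro (⟨h1, h2⟩ | ⟨h1, h2⟩)
      · have hfl : ⌊u / l⌋ = n0 := by
          apply Int.floor_eq_iff.mpr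
          constructor
          · rw [le_div_iff₀ hl]; nlinarith
          · rw [div_lt_iff₀ hl]; push_cast; simp only [hA] at h2; nlinarith
        refine ⟨⟨h1, by simp only [hA] at h2; linarith⟩, ?_⟩
        rw [floor_eq_iff_lt' hl ht0, hfl]
        push_cast
        simp only [hA] at h2
        linarith
      · have h2' : u < M := h2
        have h2a : u < c + l := lt_of_lt_of_le h2' (min_le_left _ _)
        have h2b : u < B + (l - t) := lt_of_lt_of_le h2' (min_le_right _ _)
        have hfl : ⌊u / l⌋ = n0 + 1 := by
          apply Int.floor_eq_iff.mpr
          constructor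
          · push_cast; rw [le_div_iff₀ hl]; simp only [hB] at h1; nlinarith
          · push_cast; rw [div_lt_iff₀ hl]; simp only [hB] at h2b; nlinarith
        refine ⟨⟨le_trans (le_of_lt hn0u) h1, h2a⟩, ?_⟩
        rw [floor_eq_iff_lt' hl ht0, hfl]
        push_cast
        simp only [hB] at h2b
        linarith
  -- reduce Icc to Ico
  have hIccIco : volume {u ∈ Set.Icc c (c + l) | ⌊(u + t) / l⌋ = ⌊u / l⌋}
      = volume {u ∈ Set.Ico c (c + l) | ⌊(u + t) / l⌋ = ⌊u / l⌋} := by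
    apply le_antisymm
    · have hsub : {u ∈ Set.Icc c (c + l) | ⌊(u + t) / l⌋ = ⌊u / l⌋}
          ⊆ {u ∈ Set.Ico c (c + l) | ⌊(u + t) / l⌋ = ⌊u / l⌋} ∪ {c + l} := by
        rintro u ⟨⟨h1, h2⟩, h3⟩
        rcases eq_or_lt_of_le h2 with h | h
        · right; simp [h]
        · left; exact ⟨⟨h1, h⟩, h3⟩
      calc volume _ ≤ volume ({u ∈ Set.Ico c (c + l) | ⌊(u + t) / l⌋ = ⌊u / l⌋} ∪ {c + l}) :=
            measure_mono hsub
        _ ≤ volume {u ∈ Set.Ico c (c + l) | ⌊(u + t) / l⌋ = ⌊u / l⌋} + volume ({c + l} : Set ℝ) :=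
            measure_union_le _ _
        _ = volume {u ∈ Set.Ico c (c + l) | ⌊(u + t) / l⌋ = ⌊u / l⌋} := by
            rw [Real.volume_singleton, add_zero]
    · exact measure_mono (fun u hu => ⟨Set.Ico_subset_Icc_self hu.1, hu.2⟩)
  rw [hIccIco, hT]
  have hAB : A ≤ B := by simp only [hA, hB]; linarith
  have hdisj : Disjoint (Set.Ico c A) (Set.Ico B M) := by
    apply Set.disjoint_left.mpr
    rintro u ⟨_, h2⟩ ⟨h3, _⟩
    linarith
  rw [measure_union hdisj measurableSet_Ico, Real.volume_Ico, Real.volume_Ico]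
  rcases le_total (c + l) (B + (l - t)) with hcase | hcase
  · have hMeq : M = c + l := min_eq_left hcase
    rw [hMeq]
    rw [← ENNReal.ofReal_add (by simp only [hA, hB] at *; linarith)
      (by simp only [hB] at *; linarith)]
    congr 1
    simp only [hA, hB] at *
    ring
  · have hMeq : M = B + (l - t) := min_eq_right hcase
    rw [hMeq]
    have h0 : A - c ≤ 0 := by simp only [hA, hB] at *; linarith
    rw [ENNReal.ofReal_of_nonpos h0]
    rw [zero_add]
    congr 1
    ring

private lemma main_le (l : ℝ) (hl : 0 < l) {a c : ℝ} (hac : c ≤ a) :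
    (volume {b ∈ Set.Icc (0:ℝ) l | ⌊(a + b) / l⌋ = ⌊(c + b) / l⌋}).toReal / l
      = max 0 (1 - |a - c| / l) := by
  set t : ℝ := a - c with hts
  have ht0 : 0 ≤ t := by linarith
  have habs : |a - c| = t := abs_of_nonneg ht0
  rw [habs]
  rcases lt_or_ge t l with htl | htl
  · have hset : {b ∈ Set.Icc (0:ℝ) l | ⌊(a + b) / l⌋ = ⌊(c + b) / l⌋}
        = {b ∈ Set.Icc (0:ℝ) l | ⌊(c + t + b) / l⌋ = ⌊(c + b) / l⌋} := by
      have : a = c + t := by simp [hts]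
      rw [this]
    rw [hset, key_vol l hl ht0 htl c, ENNReal.toReal_ofReal (by linarith)]
    rw [max_eq_right (by rw [sub_nonneg, div_le_one hl]; linarith)]
    field_simp
  · have hset : {b ∈ Set.Icc (0:ℝ) l | ⌊(a + b) / l⌋ = ⌊(c + b) / l⌋} = ∅ := by
      ext b
      simp only [mem_setOf_eq, Set.mem_empty_iff_false, iff_false, not_and]
      intro _
      intro heq
      have h1 : (c + b) / l + 1 ≤ (a + b) / l := by
        rw [div_add' _ _ _ hl.ne', div_le_div_iff₀ hl hl]
        nlinarith
      have h2 : ⌊(c + b) / l⌋ + 1 ≤ ⌊(a + b) / l⌋ := by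
        calc ⌊(c + b) / l⌋ + 1 = ⌊(c + b) / l + 1⌋ := (Int.floor_add_one _).symm
        _ ≤ ⌊(a + b) / l⌋ := Int.floor_le_floor h1
      omega
    rw [hset]
    simp only [measure_empty, ENNReal.toReal_zero, zero_div]
    rw [max_eq_left]
    rw [sub_nonpos, le_div_iff₀ hl]
    linarith

private lemma main_lem (l : ℝ) (hl : 0 < l) (a c : ℝ) :
    (volume {b ∈ Set.Icc (0:ℝ) l | ⌊(a + b) / l⌋ = ⌊(c + b) / l⌋}).toReal / l
      = max 0 (1 - |a - c| / l) := by
  rcases le_total c a with h | h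
  · exact main_le l hl h
  · rw [abs_sub_comm]
    rw [show {b ∈ Set.Icc (0:ℝ) l | ⌊(a + b) / l⌋ = ⌊(c + b) / l⌋}
        = {b ∈ Set.Icc (0:ℝ) l | ⌊(c + b) / l⌋ = ⌊(a + b) / l⌋} by
      ext b; simp [eq_comm]]
    exact main_le l hl h

/-- For the random projection hash `h_{w,b}(x) = ⌊(⟨x,w⟩ + b)/l⌋` with `b`
uniform on `[0, l]` (`l > 0`) and fixed `w`, the collision probability of fixed `x, y` is
`max(0, 1 − |⟨x−y, w⟩|/l)`. -/
theorem random_projection_collision_prob {d : ℕ} (l : ℝ) (hl : 0 < l)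
    (w x y : Fin d → ℝ) :
    (volume {b ∈ Set.Icc (0 : ℝ) l |
        ⌊((∑ i, x i * w i) + b) / l⌋ = ⌊((∑ i, y i * w i) + b) / l⌋}).toReal / l
      = max 0 (1 - |∑ i, (x i - y i) * w i| / l) := by
  have hsum : ∑ i, (x i - y i) * w i = (∑ i, x i * w i) - (∑ i, y i * w i) := by
    rw [← Finset.sum_sub_distrib]
    exact Finset.sum_congr rfl fun i _ => by ring
  rw [hsum]
  exact main_lem l hl _ _
end

section
/- If w has i.i.d. coordinates with a continuous distribution having CDF F, then for x, y ∈ ℝ^d the probability that the binary signatures agree is ∏_{i=1}^d (1 − |F(x_i) − F(y_i)|). -/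
open MeasureTheory ProbabilityTheory


lemma cdf_lt {Ω : Type*} [MeasureSpace Ω] [IsProbabilityMeasure (ℙ : Measure Ω)]
    (v : Ω → ℝ) (hv : Measurable v) (F : ℝ → ℝ) (hF : Continuous F)
    (hid : ∀ t, ((ℙ : Measure Ω) {ω | v ω ≤ t}).toReal = F t) (t : ℝ) :
    ((ℙ : Measure Ω) {ω | v ω < t}).toReal = F t := by
  have hU : {ω | v ω < t} = ⋃ n : ℕ, {ω | v ω ≤ t - 1/(n+1)} := by
    ext ω
    simp only [Set.mem_setOf_eq, Set.mem_iUnion]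
    constructor
    · intro h
      obtain ⟨n, hn⟩ := exists_nat_one_div_lt (sub_pos.mpr h)
      exact ⟨n, by linarith⟩
    · rintro ⟨n, hn⟩
      have : (0:ℝ) < 1/(n+1) := by positivity
      linarith
  have hmono : Monotone (fun n : ℕ => {ω | v ω ≤ t - 1/(n+1)}) := by
    intro m n hmn ω hω
    have h1 : (1:ℝ)/(n+1) ≤ 1/(m+1) := by
      apply one_div_le_one_div_of_le <;> [positivity; exact_mod_cast by omega]
    simp only [Set.mem_setOf_eq] at *
    linarith
  have htend := tendsto_measure_iUnion_atTop (μ := (ℙ : Measure Ω)) hmono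
  rw [hU]
  have hfin : (ℙ : Measure Ω) (⋃ n : ℕ, {ω | v ω ≤ t - 1/(n+1)}) ≠ ⊤ :=
    (measure_lt_top _ _).ne
  have htend' := (ENNReal.tendsto_toReal hfin).comp htend
  have htend2 : Filter.Tendsto (fun n : ℕ => F (t - 1/(n+1))) Filter.atTop (nhds (F t)) := by
    have h0 : Filter.Tendsto (fun n : ℕ => t - 1/((n:ℝ)+1)) Filter.atTop (nhds t) := by
      have := tendsto_one_div_add_atTop_nhds_zero_nat (𝕜 := ℝ)
      have := (tendsto_const_nhds (x := t) (f := Filter.atTop (α := ℕ))).sub this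
      simpa using this
    exact (hF.tendsto t).comp h0
  have heq : (fun n : ℕ => (((ℙ : Measure Ω) {ω | v ω ≤ t - 1/(n+1)}).toReal)) =
      fun n : ℕ => F (t - 1/(n+1)) := by
    funext n; exact hid _
  simp only [Function.comp_def] at htend'
  rw [heq] at htend'
  exact tendsto_nhds_unique htend2 htend' |>.symm

lemma coord_prob {Ω : Type*} [MeasureSpace Ω] [IsProbabilityMeasure (ℙ : Measure Ω)]
    (v : Ω → ℝ) (hv : Measurable v) (F : ℝ → ℝ) (hF : Continuous F)
    (hid : ∀ t, ((ℙ : Measure Ω) {ω | v ω ≤ t}).toReal = F t) {x y : ℝ} (hxy : x ≤ y) :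
    ((ℙ : Measure Ω) {ω | v ω < x ↔ v ω < y}).toReal = 1 - (F y - F x) := by
  have hset : {ω | v ω < x ↔ v ω < y} = ({ω | v ω < y} \ {ω | v ω < x})ᶜ := by
    ext ω
    simp only [Set.mem_setOf_eq, Set.mem_compl_iff, Set.mem_diff]
    constructor
    · rintro h ⟨h1, h2⟩; exact h2 (h.mpr h1)
    · intro h
      constructor
      · intro hx; linarith
      · intro hy; by_contra hx; exact h ⟨hy, hx⟩
  have hsub : {ω | v ω < x} ⊆ {ω | v ω < y} := fun ω h => lt_of_lt_of_le h hxy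
  have hmx : MeasurableSet {ω | v ω < x} := hv measurableSet_Iio
  have hmy : MeasurableSet {ω | v ω < y} := hv measurableSet_Iio
  rw [hset, measure_compl ((hmy.diff hmx)) (measure_lt_top _ _).ne, measure_univ,
    measure_diff hsub hmx.nullMeasurableSet (measure_lt_top _ _).ne]
  rw [ENNReal.toReal_sub_of_le (by
      exact le_trans (tsub_le_self) (prob_le_one)) (by simp),
    ENNReal.toReal_sub_of_le (measure_mono hsub) (measure_lt_top _ _).ne]
  rw [cdf_lt v hv F hF hid, cdf_lt v hv F hF hid]
  simp

/-- If the threshold vector `w` has i.i.d. coordinates with a continuous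
CDF `F`, then for `x, y ∈ ℝ^d` the probability that the binary signatures of `x` and `y`
agree (i.e. `wᵢ < xᵢ ⟺ wᵢ < yᵢ` in every coordinate) is `∏ᵢ (1 − |F(xᵢ) − F(yᵢ)|)`. -/
theorem binary_signature_agreement_prob {Ω : Type*} [MeasureSpace Ω]
    [IsProbabilityMeasure (ℙ : Measure Ω)] (d : ℕ) (w : Fin d → Ω → ℝ)
    (hmeas : ∀ i, Measurable (w i)) (F : ℝ → ℝ) (hF : Continuous F)
    (hident : ∀ i t, ((ℙ : Measure Ω) {ω | w i ω ≤ t}).toReal = F t)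
    (hindep : iIndepFun w ℙ)
    (x y : Fin d → ℝ) :
    ((ℙ : Measure Ω) {ω | ∀ i, (w i ω < x i ↔ w i ω < y i)}).toReal
      = ∏ i, (1 - |F (x i) - F (y i)|) := by
  set sets : ∀ i : Fin d, Set ℝ := fun i => {t | t < x i ↔ t < y i} with hsets
  have hms : ∀ i, i ∈ Finset.univ → MeasurableSet (sets i) := by
    intro i _
    have : sets i = (Set.Iio (x i) ∩ Set.Iio (y i)) ∪ ((Set.Iio (x i))ᶜ ∩ (Set.Iio (y i))ᶜ) := by
      ext t
      simp only [hsets, Set.mem_setOf_eq, Set.mem_union, Set.mem_inter_iff, Set.mem_Iio,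
        Set.mem_compl_iff, not_lt]
      by_cases h1 : t < x i <;> by_cases h2 : t < y i <;> simp [h1, h2] <;>
        first
        | tauto
        | exact ⟨le_of_not_gt h1, le_of_not_gt h2⟩
    rw [this]
    exact ((measurableSet_Iio.inter measurableSet_Iio).union
      (measurableSet_Iio.compl.inter measurableSet_Iio.compl))
  have hkey := hindep.measure_inter_preimage_eq_mul Finset.univ hms
  have hset : {ω | ∀ i, (w i ω < x i ↔ w i ω < y i)} = ⋂ i ∈ Finset.univ, w i ⁻¹' sets i := by
    ext ω; simp [hsets]
  rw [hset, hkey, ENNReal.toReal_prod]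
  apply Finset.prod_congr rfl
  intro i _
  have hpre : w i ⁻¹' sets i = {ω | w i ω < x i ↔ w i ω < y i} := rfl
  rw [hpre]
  have hmonoF : ∀ s t : ℝ, s ≤ t → F s ≤ F t := by
    intro s t hst
    rw [← hident i s, ← hident i t]
    exact ENNReal.toReal_mono (measure_ne_top _ _)
      (measure_mono (fun ω hω => le_trans hω hst))
  rcases le_total (x i) (y i) with h | h
  · rw [coord_prob (w i) (hmeas i) F hF (hident i) h,
      abs_of_nonpos (sub_nonpos.mpr (hmonoF _ _ h))]
    ring
  · have hcomm : {ω | w i ω < x i ↔ w i ω < y i} = {ω | w i ω < y i ↔ w i ω < x i} := by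
      ext ω; simp [Iff.comm]
    rw [hcomm, coord_prob (w i) (hmeas i) F hF (hident i) h,
      abs_of_nonneg (sub_nonneg.mpr (hmonoF _ _ h))]
end
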